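/- Let p ≥ 1, k > 0, let Λ be a p × p real diagonal matrix, Γ a p × p real orthogonal matrix, T a real p × (m − p) matrix and R = [1 | T]. Let W : ℝ → Matrix (Fin m) (Fin m) ℝ be continuous with W(t) positive semidefinite diagonal, and suppose ∫_{t₀}^{t₀+T₀} (Γᵀ ⬝ R ⬝ W(τ) ⬝ Rᵀ ⬝ Γ) dτ ≤ μ₂ • 1 in the Loewner order for all t₀ ≥ 0. Then the injection gain K(t) = −k • (Λ ⬝ Γᵀ ⬝ R ⬝ W(t)^{1/2}) satisfies, for all t₀ ≥ 0, ∫_{t₀}^{t₀+T₀} ‖K(τ)‖_F² dτ ≤ k²·‖Λ‖²·trace(∫_{t₀}^{t₀+T₀} Γᵀ R W(τ) Rᵀ Γ dτ) ≤ k²·‖Λ‖²·p·μ₂, where ‖·‖_F is the Frobenius norm, ‖Λ‖ the operator norm, and W(τ)^{1/2} the positive semidefinite square root of W(τ). -/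

import Mathlib

open MeasureTheory Matrix

/-- Entrywise interval integral of a matrix-valued function. -/
noncomputable def intMat {α β : Type*} (f : ℝ → Matrix α β ℝ) (a b : ℝ) : Matrix α β ℝ :=
  Matrix.of fun i j => ∫ τ in a..b, f τ i j

/-- Loewner order: `A ≤ B` iff `B - A` is positive semidefinite. -/
def loewnerLE {α : Type*} [Fintype α] (A B : Matrix α α ℝ) : Prop := (B - A).PosSemidef

/-- Euclidean norm of a vector. -/
noncomputable def euclNorm {α : Type*} [Fintype α] (v : α → ℝ) : ℝ :=
  Real.sqrt (∑ i, v i ^ 2)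

/-- Euclidean (ℓ²-ℓ²) operator norm of a matrix. -/
noncomputable def matOpNorm {α β : Type*} [Fintype α] [Fintype β] (A : Matrix α β ℝ) : ℝ :=
  sSup {r : ℝ | ∃ v : β → ℝ, euclNorm v ≤ 1 ∧ r = euclNorm (A.mulVec v)}

/-- Frobenius norm of a matrix. -/
noncomputable def frobNorm {α β : Type*} [Fintype α] [Fintype β] (A : Matrix α β ℝ) : ℝ :=
  Real.sqrt (∑ i, ∑ j, A i j ^ 2)

noncomputable def Matrix.PosSemidef.sqrt {n : Type*} [Fintype n] [DecidableEq n] {A : Matrix n n ℝ}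
    (hA : A.PosSemidef) : Matrix n n ℝ :=
  (hA.1.eigenvectorUnitary : Matrix n n ℝ) * Matrix.diagonal (Real.sqrt ∘ hA.1.eigenvalues) *
    (star hA.1.eigenvectorUnitary : Matrix n n ℝ)

lemma Matrix.PosSemidef.posSemidef_sqrt {n : Type*} [Fintype n] [DecidableEq n] {A : Matrix n n ℝ}
    (hA : A.PosSemidef) : hA.sqrt.PosSemidef := by
  have h := (posSemidef_diagonal_iff.mpr fun i => Real.sqrt_nonneg (hA.1.eigenvalues i)).mul_mul_conjTranspose_same
    (hA.1.eigenvectorUnitary : Matrix n n ℝ)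
  unfold Matrix.PosSemidef.sqrt
  simpa [Matrix.star_eq_conjTranspose, Function.comp_def] using h

lemma Matrix.PosSemidef.sqrt_mul_self {n : Type*} [Fintype n] [DecidableEq n] {A : Matrix n n ℝ}
    (hA : A.PosSemidef) : hA.sqrt * hA.sqrt = A := by
  have hU := Matrix.mem_unitaryGroup_iff'.mp hA.1.eigenvectorUnitary.2
  have hD : Matrix.diagonal (Real.sqrt ∘ hA.1.eigenvalues) * Matrix.diagonal (Real.sqrt ∘ hA.1.eigenvalues)
      = Matrix.diagonal hA.1.eigenvalues := by
    rw [Matrix.diagonal_mul_diagonal]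
    congr 1; funext i
    exact Real.mul_self_sqrt (hA.eigenvalues_nonneg i)
  unfold Matrix.PosSemidef.sqrt
  conv_rhs => rw [hA.1.spectral_theorem]
  rw [Unitary.conjStarAlgAut_apply]
  calc _ = (hA.1.eigenvectorUnitary : Matrix n n ℝ) * (Matrix.diagonal (Real.sqrt ∘ hA.1.eigenvalues) *
      ((star hA.1.eigenvectorUnitary : Matrix n n ℝ) * (hA.1.eigenvectorUnitary : Matrix n n ℝ)) *
      Matrix.diagonal (Real.sqrt ∘ hA.1.eigenvalues)) * (star hA.1.eigenvectorUnitary : Matrix n n ℝ) := by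
        simp only [Matrix.mul_assoc]
    _ = _ := by
        rw [hU, Matrix.mul_one, hD]; simp

lemma psd_diag_nonneg {n : Type*} [Fintype n] [DecidableEq n] {A : Matrix n n ℝ}
    (hA : A.PosSemidef) (i : n) : 0 ≤ A i i := by
  have := hA.2 (Finsupp.single i 1)
  simpa [dotProduct, Pi.single_apply, Finset.sum_ite_eq'] using this

lemma diag_sq_le_opNorm_sq {n : ℕ} (d : Fin n → ℝ) (i : Fin n) :
    d i ^ 2 ≤ matOpNorm (Matrix.diagonal d) ^ 2 := by
  set S : Set ℝ := {r : ℝ | ∃ v : Fin n → ℝ, euclNorm v ≤ 1 ∧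
      r = euclNorm ((Matrix.diagonal d).mulVec v)} with hS
  have hbdd : BddAbove S := by
    refine ⟨Real.sqrt (∑ j, d j ^ 2), ?_⟩
    rintro r ⟨v, hv, rfl⟩
    have hv2 : ∑ j, v j ^ 2 ≤ 1 := by
      have h1 := Real.sq_sqrt (show (0:ℝ) ≤ ∑ j, v j ^ 2 from
        Finset.sum_nonneg fun j _ => sq_nonneg _)
      have h2 := Real.sqrt_nonneg (∑ j, v j ^ 2)
      have := hv
      unfold euclNorm at this
      nlinarith
    unfold euclNorm
    apply Real.sqrt_le_sqrt
    apply Finset.sum_le_sum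
    intro j _
    have hvj : v j ^ 2 ≤ 1 := by
      have : v j ^ 2 ≤ ∑ j', v j' ^ 2 :=
        Finset.single_le_sum (fun j' _ => sq_nonneg (v j')) (Finset.mem_univ j)
      linarith
    have : (Matrix.diagonal d).mulVec v j = d j * v j := by
      simp [Matrix.mulVec_diagonal]
    rw [this]
    nlinarith [sq_nonneg (d j)]
  have hmem : |d i| ∈ S := by
    refine ⟨Pi.single i 1, ?_, ?_⟩
    · unfold euclNorm
      have : ∑ j, (Pi.single i 1 : Fin n → ℝ) j ^ 2 = 1 := by
        simp [Pi.single_apply, Finset.sum_ite_eq']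
      rw [this, Real.sqrt_one]
    · unfold euclNorm
      have : ∀ j, (Matrix.diagonal d).mulVec (Pi.single i 1) j ^ 2
          = (if j = i then d i ^ 2 else 0) := by
        intro j
        simp [Matrix.mulVec_diagonal, Pi.single_apply]
        split <;> simp_all
      rw [Fintype.sum_congr _ _ this]
      simp [Real.sqrt_sq_eq_abs]
  have hle : |d i| ≤ matOpNorm (Matrix.diagonal d) := le_csSup hbdd hmem
  calc d i ^ 2 = |d i| ^ 2 := (sq_abs _).symm
    _ ≤ matOpNorm (Matrix.diagonal d) ^ 2 :=
        pow_le_pow_left₀ (abs_nonneg _) hle 2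

/-- Boundedness estimate on the output-injection gain `K(t) = -k Λ Γᵀ R W(t)^{1/2}`. -/
theorem stmt8 (p q : ℕ) (hp : 0 < p) (k : ℝ) (hk : 0 < k)
    (d : Fin p → ℝ)
    (Λ : Matrix (Fin p) (Fin p) ℝ) (hΛ : Λ = Matrix.diagonal d)
    (Γ : Matrix (Fin p) (Fin p) ℝ) (hΓ : Γᵀ * Γ = 1)
    (T : Matrix (Fin p) (Fin q) ℝ)
    (R : Matrix (Fin p) (Fin p ⊕ Fin q) ℝ) (hR : R = Matrix.fromCols 1 T)
    (W : ℝ → Matrix (Fin p ⊕ Fin q) (Fin p ⊕ Fin q) ℝ)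
    (hWcont : Continuous W)
    (hWdiag : ∀ t, (W t).IsDiag)
    (hWpsd : ∀ t, (W t).PosSemidef)
    (T₀ μ₂ : ℝ) (hT₀ : 0 < T₀) (hμ₂ : 0 < μ₂)
    (hUB : ∀ t₀ : ℝ, 0 ≤ t₀ →
      loewnerLE (intMat (fun τ => Γᵀ * R * W τ * Rᵀ * Γ) t₀ (t₀ + T₀))
        (μ₂ • (1 : Matrix (Fin p) (Fin p) ℝ))) :
    ∀ t₀ : ℝ, 0 ≤ t₀ →
      (∫ τ in t₀..(t₀ + T₀), frobNorm ((-k) • (Λ * Γᵀ * R * (((hWpsd τ).1.eigenvectorUnitary : Matrix (Fin p ⊕ Fin q) (Fin p ⊕ Fin q) ℝ) *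
          Matrix.diagonal (Real.sqrt ∘ (hWpsd τ).1.eigenvalues) *
          (star (hWpsd τ).1.eigenvectorUnitary : Matrix (Fin p ⊕ Fin q) (Fin p ⊕ Fin q) ℝ)))) ^ 2) ≤
        k ^ 2 * matOpNorm Λ ^ 2 *
          Matrix.trace (intMat (fun τ => Γᵀ * R * W τ * Rᵀ * Γ) t₀ (t₀ + T₀)) ∧
      k ^ 2 * matOpNorm Λ ^ 2 *
          Matrix.trace (intMat (fun τ => Γᵀ * R * W τ * Rᵀ * Γ) t₀ (t₀ + T₀)) ≤
        k ^ 2 * matOpNorm Λ ^ 2 * p * μ₂ := by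
  intro t₀ ht₀
  set c := matOpNorm Λ with hc
  set N : ℝ → Matrix (Fin p) (Fin p) ℝ := fun τ => Γᵀ * R * W τ * Rᵀ * Γ with hN
  have ht1 : t₀ ≤ t₀ + T₀ := by linarith
  -- M τ := Γᵀ * R * sqrt(W τ)
  have hMMt : ∀ τ, (Γᵀ * R * (hWpsd τ).sqrt) * (Γᵀ * R * (hWpsd τ).sqrt)ᵀ = N τ := by
    intro τ
    have hsqT : ((hWpsd τ).sqrt)ᵀ = (hWpsd τ).sqrt := by
      rw [← Matrix.conjTranspose_eq_transpose_of_trivial]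
      exact (hWpsd τ).posSemidef_sqrt.1
    rw [Matrix.transpose_mul, Matrix.transpose_mul, Matrix.transpose_transpose, hsqT]
    have := (hWpsd τ).sqrt_mul_self
    rw [hN]
    rw [show Γᵀ * R * (hWpsd τ).sqrt * ((hWpsd τ).sqrt * (Rᵀ * Γ))
        = Γᵀ * R * ((hWpsd τ).sqrt * (hWpsd τ).sqrt) * Rᵀ * Γ by
      simp only [Matrix.mul_assoc], this]
  have hNdiag : ∀ τ i, N τ i i = ∑ j, (Γᵀ * R * (hWpsd τ).sqrt) i j ^ 2 := by
    intro τ i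
    rw [← hMMt, Matrix.mul_apply]
    refine Finset.sum_congr rfl fun j _ => ?_
    rw [Matrix.transpose_apply, sq]
  have hNdiag_nonneg : ∀ τ i, 0 ≤ N τ i i := fun τ i => by
    rw [hNdiag]; exact Finset.sum_nonneg fun j _ => sq_nonneg _
  -- pointwise identity for the Frobenius norm squared
  have hpt : ∀ τ, frobNorm ((-k) • (Λ * Γᵀ * R * (hWpsd τ).sqrt)) ^ 2
      = ∑ i, k ^ 2 * d i ^ 2 * N τ i i := by
    intro τ
    have h1 : frobNorm ((-k) • (Λ * Γᵀ * R * (hWpsd τ).sqrt)) ^ 2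
        = ∑ i, ∑ j, ((-k) • (Λ * Γᵀ * R * (hWpsd τ).sqrt)) i j ^ 2 := by
      unfold frobNorm
      exact Real.sq_sqrt (Finset.sum_nonneg fun i _ =>
        Finset.sum_nonneg fun j _ => sq_nonneg _)
    rw [h1]
    refine Finset.sum_congr rfl fun i _ => ?_
    rw [hNdiag]
    rw [Finset.mul_sum]
    refine Finset.sum_congr rfl fun j _ => ?_
    have hentry : ((-k) • (Λ * Γᵀ * R * (hWpsd τ).sqrt)) i j
        = -k * (d i * (Γᵀ * R * (hWpsd τ).sqrt) i j) := by
      rw [hΛ]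
      rw [show Matrix.diagonal d * Γᵀ * R * (hWpsd τ).sqrt
          = Matrix.diagonal d * (Γᵀ * R * (hWpsd τ).sqrt) by
        simp only [Matrix.mul_assoc]]
      simp [Matrix.diagonal_mul]
    rw [hentry]; ring
  -- continuity / integrability
  have hNc : Continuous N := by
    exact ((continuous_const.matrix_mul hWcont).matrix_mul
      continuous_const).matrix_mul continuous_const
  have hint : ∀ i : Fin p, IntervalIntegrable (fun τ => N τ i i) volume t₀ (t₀ + T₀) :=
    fun i => (hNc.matrix_elem i i).intervalIntegrable _ _
  have hInonneg : ∀ i : Fin p, 0 ≤ ∫ τ in t₀..(t₀ + T₀), N τ i i := fun i =>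
    intervalIntegral.integral_nonneg ht1 fun τ _ => hNdiag_nonneg τ i
  have htrace : Matrix.trace (intMat N t₀ (t₀ + T₀))
      = ∑ i, ∫ τ in t₀..(t₀ + T₀), N τ i i := by
    simp [Matrix.trace, Matrix.diag, intMat]
  constructor
  · calc (∫ τ in t₀..(t₀ + T₀), frobNorm ((-k) • (Λ * Γᵀ * R * (hWpsd τ).sqrt)) ^ 2)
        = ∫ τ in t₀..(t₀ + T₀), ∑ i, k ^ 2 * d i ^ 2 * N τ i i := by
          apply intervalIntegral.integral_congr
          intro τ _
          exact hpt τ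
      _ = ∑ i, ∫ τ in t₀..(t₀ + T₀), k ^ 2 * d i ^ 2 * N τ i i := by
          apply intervalIntegral.integral_finset_sum
          intro i _
          exact (hint i).const_mul _
      _ = ∑ i, k ^ 2 * d i ^ 2 * ∫ τ in t₀..(t₀ + T₀), N τ i i := by
          refine Finset.sum_congr rfl fun i _ => ?_
          exact intervalIntegral.integral_const_mul _ _
      _ ≤ ∑ i, k ^ 2 * c ^ 2 * ∫ τ in t₀..(t₀ + T₀), N τ i i := by
          refine Finset.sum_le_sum fun i _ => ?_
          have hd : d i ^ 2 ≤ c ^ 2 := by rw [hc, hΛ]; exact diag_sq_le_opNorm_sq d i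
          have h0 := hInonneg i
          nlinarith [mul_le_mul_of_nonneg_right hd (mul_nonneg (sq_nonneg k) h0)]
      _ = k ^ 2 * c ^ 2 * Matrix.trace (intMat N t₀ (t₀ + T₀)) := by
          rw [htrace, Finset.mul_sum]
  · have hpsd := hUB t₀ ht₀
    unfold loewnerLE at hpsd
    have hentry : ∀ i : Fin p, intMat N t₀ (t₀ + T₀) i i ≤ μ₂ := by
      intro i
      have := psd_diag_nonneg hpsd i
      simp only [Matrix.sub_apply, Matrix.smul_apply, Matrix.one_apply_eq, smul_eq_mul,
        mul_one] at this
      linarith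
    have htr : Matrix.trace (intMat N t₀ (t₀ + T₀)) ≤ p * μ₂ := by
      rw [htrace]
      calc (∑ i, ∫ τ in t₀..(t₀ + T₀), N τ i i) ≤ ∑ _i : Fin p, μ₂ := by
            refine Finset.sum_le_sum fun i _ => ?_
            have := hentry i
            simpa [intMat] using this
        _ = p * μ₂ := by simp [Finset.sum_const, mul_comm]
    have hnn : (0:ℝ) ≤ k ^ 2 * c ^ 2 := by positivity
    calc k ^ 2 * c ^ 2 * Matrix.trace (intMat N t₀ (t₀ + T₀))
        ≤ k ^ 2 * c ^ 2 * (p * μ₂) := mul_le_mul_of_nonneg_left htr hnn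
      _ = k ^ 2 * c ^ 2 * p * μ₂ := by ring
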